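/- arXiv:2601.11799 — 7 statements merged into one kernel-verified Lean document; each statement's English description precedes it below -/
import Mathlib

section
/- Let α ∈ (0,1) be a quadratic irrational with primitive integer minimal polynomial f(x) = ax² + bx + c and height H = max(|a|,|b|,|c|) ≥ 1. Let N = exit(α) and put θ_{N-1} = {3^{N-1} α} ∈ M = [1/3, 2/3). Then dist(θ_{N-1}, {1/3, 2/3}) ≥ 1 / (30 · H² · 3^N). -/
/-- θ_n(α) = {3^n α}, the fractional part of 3^n α. -/
noncomputable def theta (α : ℝ) (n : ℕ) : ℝ := Int.fract (3 ^ n * α)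

set_option maxHeartbeats 1600000 in
/-- Exit clearance lower bound: for a quadratic irrational α ∈ (0,1) with
primitive minimal polynomial ax²+bx+c, height H = max(|a|,|b|,|c|) ≥ 1,
and exit time N (θ_{N-1} ∈ M, θ_m ∉ M for m < N-1), one has
dist(θ_{N-1}, {1/3, 2/3}) ≥ 1/(30 H² 3^N). -/
theorem stmt1 (α : ℝ) (a b c : ℤ) (H : ℕ)
    (hα0 : 0 < α) (hα1 : α < 1) (hirr : Irrational α)
    (ha : a ≠ 0) (hroot : (a : ℝ) * α ^ 2 + (b : ℝ) * α + (c : ℝ) = 0)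
    (hprim : Int.gcd a (Int.gcd b c) = 1)
    (hH : H = max a.natAbs (max b.natAbs c.natAbs)) (hH1 : 1 ≤ H)
    (N : ℕ) (hN : 1 ≤ N)
    (hexit : theta α (N - 1) ∈ Set.Ico (1/3 : ℝ) (2/3))
    (hmin : ∀ m, m < N - 1 → theta α m ∉ Set.Ico (1/3 : ℝ) (2/3)) :
    Metric.infDist (theta α (N - 1)) ({1/3, 2/3} : Set ℝ)
      ≥ 1 / (30 * (H : ℝ) ^ 2 * 3 ^ N) := by
  have ha' : (a : ℝ) ≠ 0 := Int.cast_ne_zero.mpr ha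
  obtain ⟨Hr, hHrdef⟩ : ∃ x : ℝ, x = (H : ℝ) := ⟨_, rfl⟩
  have hHr1 : (1 : ℝ) ≤ Hr := by rw [hHrdef]; exact_mod_cast hH1
  have haH : |(a : ℝ)| ≤ Hr := by
    have h1 : a.natAbs ≤ H := hH ▸ le_max_left _ _
    calc |(a:ℝ)| = ((|a| : ℤ) : ℝ) := by push_cast; ring
      _ = ((a.natAbs : ℤ) : ℝ) := by rw [Int.natCast_natAbs]
      _ ≤ (H : ℝ) := by exact_mod_cast h1
      _ = Hr := hHrdef.symm
  have hbH : |(b : ℝ)| ≤ Hr := by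
    have h1 : b.natAbs ≤ H := hH ▸ le_trans (le_max_left _ _) (le_max_right _ _)
    calc |(b:ℝ)| = ((|b| : ℤ) : ℝ) := by push_cast; ring
      _ = ((b.natAbs : ℤ) : ℝ) := by rw [Int.natCast_natAbs]
      _ ≤ (H : ℝ) := by exact_mod_cast h1
      _ = Hr := hHrdef.symm
  have ha1 : (1 : ℝ) ≤ |(a : ℝ)| := by
    have h1 : (1 : ℤ) ≤ |a| := Int.one_le_abs ha
    calc (1:ℝ) ≤ ((|a| : ℤ) : ℝ) := by exact_mod_cast h1
      _ = |(a : ℝ)| := by push_cast; ring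
  obtain ⟨T, hTdef⟩ : ∃ T : ℝ, T = 3 ^ N := ⟨_, rfl⟩
  have hT1 : (1 : ℝ) ≤ T := by
    rw [hTdef]
    calc (1:ℝ) = 1 ^ N := (one_pow N).symm
      _ ≤ 3 ^ N := pow_le_pow_left₀ (by norm_num) (by norm_num) N
  have hT0 : (0 : ℝ) < T := by linarith
  obtain ⟨β, hβdef⟩ : ∃ x : ℝ, x = T * α := ⟨_, rfl⟩
  have hβroot : (a : ℝ) * β ^ 2 + T * b * β + T ^ 2 * c = 0 := by
    rw [hβdef]; linear_combination T ^ 2 * hroot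
  have hβirr : Irrational β := by
    have h3 : Irrational (((3 ^ N : ℤ) : ℝ) * α) := hirr.intCast_mul (by positivity)
    have he : ((3 ^ N : ℤ) : ℝ) * α = β := by rw [hβdef, hTdef]; push_cast; ring
    rwa [he] at h3
  have hβpos : 0 < β := by rw [hβdef]; positivity
  have hβlt : β < T := by rw [hβdef]; nlinarith
  -- key Liouville-type bound
  have key : ∀ m : ℤ, |β - (m : ℝ)| ≤ 1 → 1 / (4 * Hr ^ 2 * T) ≤ |β - (m : ℝ)| := by
    intro m hm
    obtain ⟨β', hβ'def⟩ : ∃ x : ℝ, x = -(T * b) / a - β := ⟨_, rfl⟩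
    have hsum : (a : ℝ) * β' = -(T * b) - a * β := by
      rw [hβ'def]; field_simp
    have hprod : (a : ℝ) * (m : ℝ) ^ 2 + T * b * m + T ^ 2 * c
        = a * ((m : ℝ) - β) * ((m : ℝ) - β') := by
      linear_combination ((m : ℝ) - β) * hsum + hβroot
    have h1 : (m : ℝ) - β ≠ 0 := sub_ne_zero.mpr (fun h => (hβirr.ne_int m) h.symm)
    have hβ'irr : Irrational β' := by
      have hq : Irrational ((((-(3 ^ N * b) : ℤ) : ℚ) / ((a : ℤ) : ℚ) : ℚ) - β) :=
        hβirr.ratCast_sub (q := _)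
      have heq : (((((-(3 ^ N * b) : ℤ) : ℚ) / ((a : ℤ) : ℚ)) : ℚ) : ℝ) = -(T * b) / a := by
        push_cast [hTdef]
        ring
      rw [hβ'def, ← heq]
      exact hq
    have h2 : (m : ℝ) - β' ≠ 0 := sub_ne_zero.mpr (fun h => (hβ'irr.ne_int m) h.symm)
    have hgzR : ((a * m ^ 2 + 3 ^ N * b * m + (3 ^ N) ^ 2 * c : ℤ) : ℝ)
        = a * ((m : ℝ) - β) * ((m : ℝ) - β') := by
      rw [← hprod, hTdef]; push_cast; ring
    have hgz : (a * m ^ 2 + 3 ^ N * b * m + (3 ^ N) ^ 2 * c : ℤ) ≠ 0 := by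
      rw [← Int.cast_ne_zero (α := ℝ)] <;> try skip
      rw [hgzR]
      exact mul_ne_zero (mul_ne_zero ha' h1) h2
    have h1le : (1 : ℝ) ≤ |(a : ℝ)| * |(m : ℝ) - β| * |(m : ℝ) - β'| := by
      have hz : (1 : ℤ) ≤ |a * m ^ 2 + 3 ^ N * b * m + (3 ^ N) ^ 2 * c| :=
        Int.one_le_abs hgz
      have h2' : (1 : ℝ) ≤ |((a * m ^ 2 + 3 ^ N * b * m + (3 ^ N) ^ 2 * c : ℤ) : ℝ)| := by
        rw [← Int.cast_abs]; exact_mod_cast hz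
      rwa [hgzR, abs_mul, abs_mul] at h2'
    have hba : |(b : ℝ) / a| ≤ Hr := by
      rw [abs_div]
      calc |(b:ℝ)| / |(a:ℝ)| ≤ |(b:ℝ)| / 1 :=
            div_le_div_of_nonneg_left (abs_nonneg _) (by norm_num) ha1
        _ = |(b:ℝ)| := div_one _
        _ ≤ Hr := hbH
    have hββ' : |β - β'| ≤ (2 + Hr) * T := by
      have heq : β - β' = 2 * β + T * ((b : ℝ) / a) := by
        rw [hβ'def]; field_simp; ring
      have e1 : |T * ((b:ℝ)/a)| = T * |(b:ℝ)/a| := by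
        rw [abs_mul, abs_of_nonneg hT0.le]
      have e2 : |2 * β| = 2 * |β| := by rw [abs_mul]; norm_num
      have e3 : |β| ≤ T := by rw [abs_of_pos hβpos]; exact hβlt.le
      calc |β - β'| = |2 * β + T * ((b:ℝ)/a)| := by rw [heq]
        _ ≤ |2 * β| + |T * ((b:ℝ)/a)| := abs_add_le _ _
        _ = 2 * |β| + T * |(b:ℝ)/a| := by rw [e1, e2]
        _ ≤ 2 * T + T * Hr := by
            have hh1 : T * |(b:ℝ)/a| ≤ T * Hr := mul_le_mul_of_nonneg_left hba hT0.le
            linarith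
        _ ≤ (2 + Hr) * T := by nlinarith
    have hmb' : |(m : ℝ) - β'| ≤ 4 * Hr * T := by
      calc |(m : ℝ) - β'| ≤ |(m:ℝ) - β| + |β - β'| := abs_sub_le _ _ _
        _ ≤ 1 + (2 + Hr) * T := by
            have hc : |(m:ℝ) - β| = |β - (m:ℝ)| := abs_sub_comm _ _
            rw [hc]; linarith
        _ ≤ 4 * Hr * T := by nlinarith
    rw [div_le_iff₀ (by positivity), abs_sub_comm]
    have hchain : |(a : ℝ)| * |(m : ℝ) - β| * |(m : ℝ) - β'|
        ≤ Hr * |(m : ℝ) - β| * (4 * Hr * T) := by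
      have hs1 : |(a:ℝ)| * |(m:ℝ) - β| ≤ Hr * |(m:ℝ) - β| :=
        mul_le_mul_of_nonneg_right haH (abs_nonneg _)
      exact mul_le_mul hs1 hmb' (abs_nonneg _) (by positivity)
    have hre : Hr * |(m:ℝ) - β| * (4 * Hr * T) = |(m:ℝ) - β| * (4 * Hr ^ 2 * T) := by ring
    linarith
  -- now the exit clearance
  have hNs : N - 1 + 1 = N := Nat.succ_pred_eq_of_pos hN
  have h3 : (3 : ℝ) * 3 ^ (N - 1) = T := by
    rw [hTdef]
    conv_rhs => rw [← hNs]
    rw [pow_succ']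
  obtain ⟨θ, hθdef⟩ : ∃ x : ℝ, x = theta α (N - 1) := ⟨_, rfl⟩
  obtain ⟨k, hkdef⟩ : ∃ k : ℤ, k = ⌊(3:ℝ) ^ (N - 1) * α⌋ := ⟨_, rfl⟩
  have hθeq : θ = 3 ^ (N - 1) * α - (k : ℝ) := by
    rw [hθdef, theta, Int.fract, hkdef]
  have hθlo : (1/3 : ℝ) ≤ θ := hθdef ▸ hexit.1
  have hθhi : θ < (2/3 : ℝ) := hθdef ▸ hexit.2
  -- distance to 1/3
  have e1 : β - ((3 * k + 1 : ℤ) : ℝ) = 3 * (θ - 1/3) := by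
    rw [hθeq, hβdef]
    push_cast
    linear_combination α * h3.symm
  have hd1 : 1 / (30 * Hr ^ 2 * T) ≤ θ - 1/3 := by
    have hb1 : |β - ((3 * k + 1 : ℤ) : ℝ)| ≤ 1 := by
      rw [e1, abs_of_nonneg (by linarith)]
      linarith
    have hk1 := key (3 * k + 1) hb1
    rw [e1, abs_of_nonneg (by linarith : (0:ℝ) ≤ 3 * (θ - 1/3))] at hk1
    rw [div_le_iff₀ (by positivity)] at hk1 ⊢
    nlinarith
  -- distance to 2/3
  have e2 : β - ((3 * k + 2 : ℤ) : ℝ) = 3 * (θ - 2/3) := by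
    rw [hθeq, hβdef]
    push_cast
    linear_combination α * h3.symm
  have hd2 : 1 / (30 * Hr ^ 2 * T) ≤ 2/3 - θ := by
    have hb2 : |β - ((3 * k + 2 : ℤ) : ℝ)| ≤ 1 := by
      rw [e2, abs_of_nonpos (by linarith)]
      linarith
    have hk2 := key (3 * k + 2) hb2
    rw [e2, abs_of_nonpos (by linarith : 3 * (θ - 2/3) ≤ (0:ℝ))] at hk2
    rw [div_le_iff₀ (by positivity)] at hk2 ⊢
    nlinarith
  -- combine
  rw [ge_iff_le, ← not_lt]
  intro hlt
  rw [← hTdef, ← hHrdef, ← hθdef] at hlt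
  rcases (Metric.infDist_lt_iff ⟨1/3, by simp⟩).mp hlt with ⟨y, hy, hdy⟩
  rcases hy with hy | hy
  · rw [hy, Real.dist_eq] at hdy
    rw [abs_lt] at hdy
    linarith [hdy.1, hdy.2]
  · rw [Set.mem_singleton_iff.mp hy, Real.dist_eq] at hdy
    rw [abs_lt] at hdy
    linarith [hdy.1, hdy.2]
end

section
/- Let α ∈ (0,1) be a quadratic irrational of height H ≥ 2 with finite exit time N = exit(α). Then the distance from α to the middle-third Cantor set 𝒞 satisfies dist(α, 𝒞) ≥ (1 / (30 H²)) · 3^{-2N}. -/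
lemma preCantorSet_subset_unitInterval' : ∀ n, preCantorSet n ⊆ Set.Icc 0 1 := by
  intro n
  induction n with
  | zero => exact le_refl _
  | succ n ih =>
    rintro x (⟨y, hy, rfl⟩ | ⟨y, hy, rfl⟩) <;>
      obtain ⟨h0, h1⟩ := ih hy <;> constructor <;> simp <;> linarith

lemma cantor_step {x : ℝ} (hx : x ∈ cantorSet) :
    (3 * x ∈ cantorSet ∧ x ≤ 1/3) ∨ (3 * x - 2 ∈ cantorSet ∧ 2/3 ≤ x) := by
  have hmem : ∀ n, x ∈ preCantorSet n := Set.mem_iInter.mp hx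
  by_cases h : x < 2/3
  · left
    have hx3 : ∀ n, 3 * x ∈ preCantorSet n := by
      intro n
      rcases hmem (n+1) with ⟨y, hy, rfl⟩ | ⟨y, hy, hxy⟩
      · convert hy using 1; ring
      · exfalso
        obtain ⟨h0, h1⟩ := preCantorSet_subset_unitInterval' n hy
        rw [← hxy] at h; linarith
    refine ⟨Set.mem_iInter.mpr hx3, ?_⟩
    have := (preCantorSet_subset_unitInterval' 0 (hx3 0)).2
    linarith
  · right
    push_neg at h
    have hx3 : ∀ n, 3 * x - 2 ∈ preCantorSet n := by
      intro n
      rcases hmem (n+1) with ⟨y, hy, hxy⟩ | ⟨y, hy, hxy⟩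
      · exfalso
        obtain ⟨h0, h1⟩ := preCantorSet_subset_unitInterval' n hy
        rw [← hxy] at h; linarith
      · rw [← hxy]; convert hy using 1; ring
    exact ⟨Set.mem_iInter.mpr hx3, h⟩

lemma cantor_iter {x : ℝ} (hx : x ∈ cantorSet) (n : ℕ) :
    ∃ m : ℤ, 3 ^ n * x - m ∈ cantorSet := by
  induction n with
  | zero => exact ⟨0, by simpa using hx⟩
  | succ n ih =>
    obtain ⟨m, hm⟩ := ih
    rcases cantor_step hm with ⟨h, _⟩ | ⟨h, _⟩
    · exact ⟨3 * m, by convert h using 1; push_cast; ring⟩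
    · exact ⟨3 * m + 2, by convert h using 1; push_cast; ring⟩

/-- Distance bound in terms of H alone: for a quadratic irrational α ∈ (0,1)
of height H ≥ 2 with finite exit time N, dist(α, 𝒞) ≥ (1/(30 H²))·3^{-2N}.
Here `cantorSet` is Mathlib's middle-third Cantor set. -/
theorem stmt2 (α : ℝ) (a b c : ℤ) (H : ℕ)
    (hα0 : 0 < α) (hα1 : α < 1) (hirr : Irrational α)
    (ha : a ≠ 0) (hroot : (a : ℝ) * α ^ 2 + (b : ℝ) * α + (c : ℝ) = 0)
    (hprim : Int.gcd a (Int.gcd b c) = 1)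
    (hH : H = max a.natAbs (max b.natAbs c.natAbs)) (hH2 : 2 ≤ H)
    (N : ℕ) (hN : 1 ≤ N)
    (hexit : theta α (N - 1) ∈ Set.Ico (1/3 : ℝ) (2/3))
    (hmin : ∀ m, m < N - 1 → theta α m ∉ Set.Ico (1/3 : ℝ) (2/3)) :
    Metric.infDist α cantorSet ≥ 1 / (30 * (H : ℝ) ^ 2) * (1 / 3 ^ (2 * N)) := by
  obtain ⟨n, rfl⟩ : ∃ n, N = n + 1 := ⟨N - 1, (Nat.succ_pred_eq_of_pos hN).symm⟩
  clear hN hmin hprim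
  obtain ⟨hex1, hex2⟩ := hexit
  simp only [theta, Nat.add_sub_cancel] at hex1 hex2
  have hHR : (2:ℝ) ≤ H := by exact_mod_cast hH2
  have haH : |(a:ℝ)| ≤ H := by
    have h1 : (a.natAbs : ℤ) ≤ (H : ℤ) := by exact_mod_cast (hH ▸ le_max_left _ _)
    rw [← Int.cast_abs, Int.abs_eq_natAbs]
    exact_mod_cast h1
  have hbH : |(b:ℝ)| ≤ H := by
    have h1 : (b.natAbs : ℤ) ≤ (H : ℤ) := by
      exact_mod_cast (hH ▸ (le_max_left _ _).trans (le_max_right _ _))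
    rw [← Int.cast_abs, Int.abs_eq_natAbs]
    exact_mod_cast h1
  set P : ℝ := 3 ^ n with hP
  have hPpos : (0:ℝ) < P := by positivity
  -- Liouville-type bound
  have key : ∀ p : ℤ, (0:ℝ) ≤ p → (p:ℝ) ≤ 3 * P → 1 / (9 * H * P) ≤ |3 * P * α - p| := by
    intro p hp0 hp1
    set q : ℤ := 3 ^ (n + 1) with hq
    have hqR : ((q : ℤ) : ℝ) = 3 * P := by rw [hq]; push_cast; rw [hP]; ring
    have hqne : q ≠ 0 := pow_ne_zero _ (by norm_num)
    have hfact : ((p:ℝ) - q * α) * ((a:ℝ) * p + a * q * α + b * q)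
        = ((a * p ^ 2 + b * p * q + c * q ^ 2 : ℤ) : ℝ) := by
      push_cast
      linear_combination (-((q:ℝ))^2) * hroot
    have hint : ∀ (u v : ℤ), v ≠ 0 → (v:ℝ) * α ≠ (u:ℝ) := by
      intro u v hv h
      have h2 := hirr.intCast_mul hv
      rw [h] at h2
      exact (Rat.not_irrational u) (by exact_mod_cast h2)
    have h1 : (p:ℝ) - q * α ≠ 0 := by
      intro h
      exact hint p q hqne (by linarith)
    have h2 : (a:ℝ) * p + a * q * α + b * q ≠ 0 := by
      intro h
      apply hint (-(a * p + b * q)) (a * q) (mul_ne_zero ha hqne)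
      push_cast
      linarith
    have hA : (a * p ^ 2 + b * p * q + c * q ^ 2 : ℤ) ≠ 0 := by
      intro h
      rw [h] at hfact
      rcases mul_eq_zero.mp (by exact_mod_cast hfact) with h' | h'
      · apply h1; push_cast at h' ⊢; linarith
      · apply h2; push_cast at h' ⊢; linarith
    have hA1 : (1:ℝ) ≤ |((a * p ^ 2 + b * p * q + c * q ^ 2 : ℤ) : ℝ)| := by
      rw [← Int.cast_abs]
      exact_mod_cast Int.one_le_abs hA
    have hpabs : |(p:ℝ)| ≤ 3 * P := abs_le.mpr ⟨by linarith, hp1⟩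
    have hqabs : |(q:ℝ)| = 3 * P := by
      rw [abs_of_nonneg (by rw [hqR]; positivity), hqR]
    have hαabs : |α| ≤ 1 := abs_le.mpr ⟨by linarith, le_of_lt hα1⟩
    have hH0 : (0:ℝ) ≤ H := by linarith
    have t1 : |(a:ℝ) * p| ≤ (H:ℝ) * (3 * P) := by
      rw [abs_mul]; exact mul_le_mul haH hpabs (abs_nonneg _) hH0
    have t2 : |(a:ℝ) * q * α| ≤ (H:ℝ) * (3 * P) := by
      rw [abs_mul, abs_mul, hqabs]
      calc |(a:ℝ)| * (3 * P) * |α| ≤ (H:ℝ) * (3 * P) * 1 := by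
            apply mul_le_mul (mul_le_mul_of_nonneg_right haH (by positivity)) hαabs
              (abs_nonneg _) (by positivity)
        _ = (H:ℝ) * (3 * P) := by ring
    have t3 : |(b:ℝ) * q| ≤ (H:ℝ) * (3 * P) := by
      rw [abs_mul, hqabs]; exact mul_le_mul_of_nonneg_right hbH (by positivity)
    have hb2 : |(a:ℝ) * p + a * q * α + b * q| ≤ 9 * H * P :=
      (abs_add_three _ _ _).trans (by linarith)
    have habs : 1 ≤ |(p:ℝ) - q * α| * |(a:ℝ) * p + a * q * α + b * q| := by
      rw [← abs_mul, hfact]; exact hA1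
    have hle : 1 ≤ |(p:ℝ) - q * α| * (9 * H * P) := by
      calc (1:ℝ) ≤ |(p:ℝ) - q * α| * |(a:ℝ) * p + a * q * α + b * q| := habs
        _ ≤ |(p:ℝ) - q * α| * (9 * H * P) := by
            apply mul_le_mul_of_nonneg_left hb2 (abs_nonneg _)
    have heq : |3 * P * α - p| = |(p:ℝ) - q * α| := by
      rw [abs_sub_comm]; congr 1; rw [hqR]
    rw [heq, div_le_iff₀ (by positivity)]
    linarith
  -- fract / floor setup
  set θ : ℝ := Int.fract (P * α) with hθ
  set k : ℤ := ⌊P * α⌋ with hk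
  have hkθ : (k:ℝ) + θ = P * α := Int.floor_add_fract (P * α)
  have hk0 : 0 ≤ k := Int.floor_nonneg.mpr (by positivity)
  have hkP : (k : ℝ) + 1 ≤ P := by
    have h1 : P * α < P := by nlinarith
    have h2 : k < (3:ℤ) ^ n := by
      rw [hk]
      apply Int.floor_lt.mpr
      push_cast
      rw [← hP]
      exact h1
    have h3 : k + 1 ≤ (3:ℤ) ^ n := h2
    calc (k:ℝ) + 1 = ((k + 1 : ℤ) : ℝ) := by push_cast; ring
      _ ≤ (((3:ℤ)^n : ℤ) : ℝ) := by exact_mod_cast h3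
      _ = P := by push_cast; rw [hP]
  set g : ℝ := min (θ - 1/3) (2/3 - θ) with hg
  have hgle : g ≤ 1/3 := le_trans (min_le_left _ _) (by linarith)
  -- distance to Cantor set points
  have hdist : ∀ x ∈ cantorSet, g / P ≤ dist α x := by
    intro x hx
    obtain ⟨m, hm⟩ := cantor_iter hx n
    set y : ℝ := 3 ^ n * x - m with hy
    obtain ⟨hy0, hy1⟩ := cantorSet_subset_unitInterval hm
    have hgap : y ≤ 1/3 ∨ 2/3 ≤ y := by
      rcases cantor_step hm with ⟨_, h⟩ | ⟨_, h⟩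
      · exact Or.inl h
      · exact Or.inr h
    have hxval : (m:ℝ) + y = P * x := by rw [hy, hP]; ring
    have hmain : g ≤ |(k:ℝ) + θ - ((m:ℝ) + y)| := by
      by_cases hkm : k = m
      · subst hkm
        have h1 : (k:ℝ) + θ - ((k:ℝ) + y) = θ - y := by ring
        rw [h1]
        rcases hgap with h | h
        · rw [abs_of_nonneg (by linarith)]
          exact le_trans (min_le_left _ _) (by linarith)
        · rw [abs_of_nonpos (by linarith)]
          exact le_trans (min_le_right _ _) (by linarith)
      · have h1 : (1:ℝ) ≤ |(k:ℝ) - m| := by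
          have h0 : (1:ℤ) ≤ |k - m| := Int.one_le_abs (sub_ne_zero.mpr hkm)
          have : ((1:ℤ):ℝ) ≤ ((|k - m| : ℤ) : ℝ) := by exact_mod_cast h0
          rwa [Int.cast_abs, Int.cast_sub, Int.cast_one] at this
        have h2 : |θ - y| ≤ 2/3 := abs_le.mpr ⟨by linarith, by linarith⟩
        have h3 : |(k:ℝ) - m| ≤ |(k:ℝ) + θ - ((m:ℝ) + y)| + |θ - y| := by
          rw [show (k:ℝ) - m = ((k:ℝ) + θ - ((m:ℝ) + y)) + (y - θ) by ring]
          refine (abs_add_le _ _).trans ?_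
          rw [abs_sub_comm y θ]
        linarith
    rw [Real.dist_eq, div_le_iff₀ hPpos]
    have h5 : |α - x| * P = |(k:ℝ) + θ - ((m:ℝ) + y)| := by
      rw [show P = |P| from (abs_of_pos hPpos).symm, ← abs_mul]
      congr 1
      linear_combination hxval - hkθ
    rw [h5]
    exact hmain
  -- lower bound on g
  have hHpos : (0:ℝ) < H := by linarith
  have hglb : 1 / (27 * H * P) ≤ g := by
    have e1 : 3 * P * α - ((3 * k + 1 : ℤ) : ℝ) = 3 * θ - 1 := by
      push_cast; linear_combination (-3 : ℝ) * hkθ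
    have e2 : 3 * P * α - ((3 * k + 2 : ℤ) : ℝ) = 3 * θ - 2 := by
      push_cast; linear_combination (-3 : ℝ) * hkθ
    have hk0R : (0:ℝ) ≤ (k:ℝ) := by exact_mod_cast hk0
    have b1 := key (3 * k + 1) (by push_cast; linarith) (by push_cast; linarith)
    have b2 := key (3 * k + 2) (by push_cast; linarith) (by push_cast; linarith)
    rw [e1, abs_of_nonneg (by linarith)] at b1
    rw [e2, abs_of_nonpos (by linarith), neg_sub] at b2
    apply le_min
    · rw [div_le_iff₀ (by positivity)]
      rw [div_le_iff₀ (by positivity)] at b1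
      linarith
    · rw [div_le_iff₀ (by positivity)]
      rw [div_le_iff₀ (by positivity)] at b2
      linarith
  -- conclusion
  by_contra hcon
  push_neg at hcon
  obtain ⟨x, hx, hlt⟩ := (Metric.infDist_lt_iff ⟨0, zero_mem_cantorSet⟩).mp hcon
  have hpow : (3:ℝ) ^ (2 * (n + 1)) = 9 * P ^ 2 := by
    rw [hP, show 2 * (n + 1) = n * 2 + 2 by ring, pow_add, ← pow_mul]
    ring
  have hD0 : g ≤ dist α x * P := (div_le_iff₀ hPpos).mp (hdist x hx)
  have hD1 : 1 ≤ dist α x * P * (27 * H * P) := by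
    rw [← div_le_iff₀ (by positivity)]
    exact le_trans hglb hD0
  have hD2 : dist α x * (270 * H ^ 2 * P ^ 2) < 1 := by
    have h6 : dist α x < 1 / (270 * H ^ 2 * P ^ 2) := by
      calc dist α x < 1 / (30 * (H:ℝ) ^ 2) * (1 / 3 ^ (2 * (n + 1))) := hlt
        _ = 1 / (270 * H ^ 2 * P ^ 2) := by rw [hpow]; field_simp; ring
    rw [lt_div_iff₀ (by positivity)] at h6
    exact h6
  nlinarith [mul_le_mul_of_nonneg_left hD1 (show (0:ℝ) ≤ 10 * H by positivity)]
end

section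
/- Let α be a real number whose fractional part θ_0 = {α} satisfies min_{0 ≤ k ≤ 9} |θ_0 − k/9| ≥ 0.04 (i.e. δ_𝒞(α) ≥ 0.04), and suppose α is irrational. Then exit(α) ≤ 3; that is, θ_N ∈ M = [1/3, 2/3) for some N ≤ 2. -/
/-- Far from boundary: if the fractional part of an irrational α stays at
distance ≥ 0.04 from every level-2 Cantor endpoint k/9 (0 ≤ k ≤ 9), then
exit(α) ≤ 3, i.e. θ_N ∈ M = [1/3,2/3) for some N ≤ 2. -/
theorem stmt3 (α : ℝ) (hirr : Irrational α)
    (hδ : ∀ k : ℕ, k ≤ 9 → |Int.fract α - (k : ℝ) / 9| ≥ 0.04) :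
    ∃ N : ℕ, N ≤ 2 ∧ theta α N ∈ Set.Ico (1/3 : ℝ) (2/3) := by
  refine ⟨2, le_refl 2, ?_⟩
  set x := Int.fract α with hx
  have hx0 : 0 ≤ x := Int.fract_nonneg α
  have hx1 : x < 1 := Int.fract_lt_one α
  set k : ℤ := ⌊(9 : ℝ) * x⌋ with hk
  have hkle : (k : ℝ) ≤ 9 * x := Int.floor_le _
  have hklt : (9 : ℝ) * x < k + 1 := Int.lt_floor_add_one _
  have hk0 : 0 ≤ k := Int.floor_nonneg.mpr (by positivity)
  have hk9 : k < 9 := by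
    have : (9 : ℝ) * x < ((9 : ℤ) : ℝ) := by push_cast; linarith
    exact Int.floor_lt.mpr this
  have hcast : ((k.toNat : ℕ) : ℝ) = (k : ℝ) := by
    exact_mod_cast congrArg (Int.cast : ℤ → ℝ) (Int.toNat_of_nonneg hk0)
  have hcast1 : (((k.toNat + 1 : ℕ)) : ℝ) = (k : ℝ) + 1 := by
    push_cast; rw [hcast]
  have h1 := hδ k.toNat (by omega)
  have h2 := hδ (k.toNat + 1) (by omega)
  rw [hcast] at h1
  rw [hcast1] at h2
  have hd1 : x - (k : ℝ) / 9 ≥ 0.04 := by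
    have habs : |x - (k : ℝ) / 9| = x - (k : ℝ) / 9 :=
      abs_of_nonneg (by linarith)
    rw [habs] at h1; exact h1
  have hd2 : ((k : ℝ) + 1) / 9 - x ≥ 0.04 := by
    rw [abs_sub_comm, abs_of_nonneg (by linarith)] at h2
    exact h2
  have hθ : theta α 2 = 9 * x - k := by
    have heq : (3 : ℝ) ^ 2 * α = 9 * x + ((9 * ⌊α⌋ : ℤ) : ℝ) := by
      have : x = α - ⌊α⌋ := rfl
      push_cast [this]; ring
    unfold theta
    rw [heq, Int.fract_add_intCast, Int.fract]

  rw [hθ]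
  constructor
  · linarith
  · linarith
end

section
/- Let α be an irrational real number with δ_𝒞(α) ≥ 0.02. Then either (a) θ_N ∈ M = [1/3, 2/3) for some N ≤ 4, or (b) θ_N ∈ R = [2/3, 1) for some N ≤ 5. In particular the orbit (θ_N) enters M ∪ R by time N₀ ≤ 5. -/
lemma fract_triple (x : ℝ) (h : Int.fract x < 1/3) :
    Int.fract (3 * x) = 3 * Int.fract x := by
  have hx : (3:ℝ) * x = ((3 * ⌊x⌋ : ℤ) : ℝ) + 3 * Int.fract x := by
    push_cast [Int.fract]; ring
  rw [hx, Int.fract_intCast_add, Int.fract_eq_self.2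
    ⟨by have := Int.fract_nonneg x; linarith, by linarith⟩]

/-- Early R-hit or M-visit: if α is irrational with δ_𝒞(α) ≥ 0.02 (the
fractional part of α is at distance ≥ 0.02 from every k/9, 0 ≤ k ≤ 9), then
either θ_N ∈ M = [1/3,2/3) for some N ≤ 4, or θ_N ∈ R = [2/3,1) for some
N ≤ 5; in particular the orbit enters M ∪ R by time N₀ ≤ 5. -/
theorem stmt4 (α : ℝ) (hirr : Irrational α)
    (hδ : ∀ k : ℕ, k ≤ 9 → |Int.fract α - (k : ℝ) / 9| ≥ 0.02) :
    ((∃ N : ℕ, N ≤ 4 ∧ theta α N ∈ Set.Ico (1/3 : ℝ) (2/3)) ∨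
      (∃ N : ℕ, N ≤ 5 ∧ theta α N ∈ Set.Ico (2/3 : ℝ) 1)) ∧
    (∃ N : ℕ, N ≤ 5 ∧ theta α N ∈ Set.Ico (1/3 : ℝ) (2/3) ∪ Set.Ico (2/3 : ℝ) 1) := by
  have h0 := hδ 0 (by norm_num)
  have hnn := Int.fract_nonneg α
  have hα0 : Int.fract α ≥ 0.02 := by
    rw [show ((0:ℕ):ℝ)/9 = 0 by norm_num, sub_zero, abs_of_nonneg hnn] at h0
    exact h0
  have main : ((∃ N : ℕ, N ≤ 4 ∧ theta α N ∈ Set.Ico (1/3 : ℝ) (2/3)) ∨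
      (∃ N : ℕ, N ≤ 5 ∧ theta α N ∈ Set.Ico (2/3 : ℝ) 1)) := by
    by_contra hc
    push_neg at hc
    obtain ⟨h1, h2⟩ := hc
    have hL : ∀ N, N ≤ 4 → theta α N < 1/3 := by
      intro N hN
      have hnM := h1 N hN
      have hnR := h2 N (by omega)
      have hf1 : theta α N < 1 := Int.fract_lt_one _
      by_contra hlt
      push_neg at hlt
      rcases lt_or_ge (theta α N) (2/3) with hlt2 | hge2
      · exact hnM ⟨hlt, hlt2⟩
      · exact hnR ⟨hge2, hf1⟩
    have step : ∀ N, N ≤ 4 → theta α (N+1) = 3 * theta α N := by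
      intro N hN
      have : theta α (N+1) = Int.fract (3 * (3 ^ N * α)) := by
        unfold theta; ring_nf
      rw [this, fract_triple _ (hL N hN)]
      rfl
    have e0 : theta α 0 = Int.fract α := by unfold theta; norm_num
    have e1 := step 0 (by norm_num)
    have e2 := step 1 (by norm_num)
    have e3 := step 2 (by norm_num)
    have e4 := step 3 (by norm_num)
    have h4 := hL 4 (by norm_num)
    rw [e4, e3, e2, e1, e0] at h4
    linarith
  refine ⟨main, ?_⟩
  rcases main with ⟨N, hN, hmem⟩ | ⟨N, hN, hmem⟩
  · exact ⟨N, by omega, Or.inl hmem⟩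
  · exact ⟨N, hN, Or.inr hmem⟩
end

section
/- There exists an absolute constant C > 0 with the following property: if α is a quadratic irrational of height H, and for some N₀ ≥ 0 one has θ_{N₀} ∈ R = [2/3, 1) and θ_{N₀+1}, …, θ_{N₀+k} ∈ L = [0, 1/3), then k ≤ N₀ + 2 log₃ H + C. -/
/-- Fract of 3x only depends on fract of x. -/
lemma fract_three_mul (x : ℝ) : Int.fract (3 * x) = Int.fract (3 * Int.fract x) := by
  have h : 3 * Int.fract x = 3 * x - ((3 * ⌊x⌋ : ℤ) : ℝ) := by
    rw [← Int.self_sub_floor]; push_cast; ring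
  rw [h, Int.fract_sub_intCast]

lemma theta_succ (α : ℝ) (n : ℕ) : theta α (n + 1) = Int.fract (3 * theta α n) := by
  unfold theta
  rw [pow_succ, show (3:ℝ) ^ n * 3 * α = 3 * (3 ^ n * α) by ring, fract_three_mul]

set_option maxHeartbeats 1000000

/-- Universal L-run bound: there is an absolute constant C > 0 such that for
any quadratic irrational α of height H, if θ_{N₀} ∈ R = [2/3,1) and
θ_{N₀+1},…,θ_{N₀+k} ∈ L = [0,1/3), then k ≤ N₀ + 2 log₃ H + C. -/
theorem stmt7 :
    ∃ C : ℝ, 0 < C ∧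
      ∀ (α : ℝ) (a b c : ℤ) (H : ℕ),
        Irrational α → a ≠ 0 →
        (a : ℝ) * α ^ 2 + (b : ℝ) * α + (c : ℝ) = 0 →
        Int.gcd a (Int.gcd b c) = 1 →
        H = max a.natAbs (max b.natAbs c.natAbs) →
        ∀ (N₀ k : ℕ),
          theta α N₀ ∈ Set.Ico (2/3 : ℝ) 1 →
          (∀ j, 1 ≤ j → j ≤ k → theta α (N₀ + j) ∈ Set.Ico (0 : ℝ) (1/3)) →
          (k : ℝ) ≤ (N₀ : ℝ) + 2 * Real.logb 3 (H : ℝ) + C := by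
  refine ⟨3, by norm_num, ?_⟩
  intro α a b c H hirr ha hroot _hgcd hH N₀ k hR hL
  -- basic bounds on coefficients
  have hHnat : 1 ≤ H := by
    have h1 : 1 ≤ a.natAbs := Int.natAbs_pos.2 ha
    omega
  have hH1 : (1:ℝ) ≤ (H:ℝ) := by exact_mod_cast hHnat
  have hbH : |(b:ℝ)| ≤ H := by
    rw [← Int.cast_abs, Int.abs_eq_natAbs]
    exact_mod_cast (by omega : b.natAbs ≤ H)
  have hcH : |(c:ℝ)| ≤ H := by
    rw [← Int.cast_abs, Int.abs_eq_natAbs]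
    exact_mod_cast (by omega : c.natAbs ≤ H)
  have haH : |(a:ℝ)| ≤ H := by
    rw [← Int.cast_abs, Int.abs_eq_natAbs]
    exact_mod_cast (by omega : a.natAbs ≤ H)
  have ha1 : (1:ℝ) ≤ |(a:ℝ)| := by
    rw [← Int.cast_abs, Int.abs_eq_natAbs]
    exact_mod_cast (Int.natAbs_pos.2 ha)
  have hlogH : 0 ≤ Real.logb 3 (H:ℝ) := Real.logb_nonneg (by norm_num) hH1
  -- bound |α| ≤ 2H
  have hα2H : |α| ≤ 2 * H := by
    have hneg : (a:ℝ) * α ^ 2 = -((b:ℝ)*α + c) := by linarith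
    have h1 : |(a:ℝ)| * |α|^2 = |(b:ℝ) * α + c| := by
      rw [← abs_pow, ← abs_mul, hneg, abs_neg]
    have h2 : |(b:ℝ) * α + c| ≤ H * |α| + H := by
      calc |(b:ℝ) * α + c| ≤ |(b:ℝ)*α| + |(c:ℝ)| := abs_add_le _ _
        _ ≤ H * |α| + H := by rw [abs_mul]; gcongr
    have h3 : |α|^2 ≤ H * |α| + H := by nlinarith [abs_nonneg α]
    nlinarith [abs_nonneg α]
  rcases Nat.eq_zero_or_pos k with hk0 | hk1
  · subst hk0; simp; positivity
  -- the orbit formula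
  set t := theta α N₀ with ht
  have htmem := hR
  simp only [Set.mem_Ico] at htmem
  clear_value t
  have hform : ∀ j, j + 1 ≤ k → theta α (N₀ + 1 + j) = 3 ^ j * (3 * t - 2) := by
    intro j
    induction j with
    | zero =>
      intro _
      rw [show N₀ + 1 + 0 = N₀ + 1 by ring, theta_succ, ← ht]
      have : (3:ℝ) * t = (3 * t - 2) + ((2:ℤ):ℝ) := by push_cast; ring
      rw [this, Int.fract_add_intCast, Int.fract_eq_self.2 ⟨by linarith [htmem.1], by linarith [htmem.2]⟩]
      ring
    | succ j ih =>
      intro hjk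
      have hmem := hL (j+1) (by omega) (by omega)
      simp only [Set.mem_Ico] at hmem
      have hprev : theta α (N₀ + 1 + j) = 3 ^ j * (3 * t - 2) := ih (by omega)
      have heq : N₀ + (j+1) = N₀ + 1 + j := by ring
      rw [heq] at hmem
      rw [show N₀ + 1 + (j+1) = (N₀ + 1 + j) + 1 by ring, theta_succ,
        Int.fract_eq_self.2 ⟨by linarith [hmem.1], by linarith [hmem.2]⟩, hprev]
      ring
  -- value at the end of the run
  have hend := hL k (by omega) le_rfl
  simp only [Set.mem_Ico] at hend
  have hkeq : N₀ + k = N₀ + 1 + (k - 1) := by omega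
  have hendval : theta α (N₀ + k) = 3 ^ (k-1) * (3 * t - 2) := by
    rw [hkeq]; exact hform (k-1) (by omega)
  -- e0 := 3t - 2 is positive and tiny
  have hirrt : Irrational t := by
    rw [ht]; unfold theta
    rw [← Int.self_sub_floor]
    rw [show (3:ℝ)^N₀ = ((3^N₀ : ℤ):ℝ) by push_cast; ring]
    exact (hirr.intCast_mul (by positivity)).sub_intCast _
  have he0pos : 0 < 3 * t - 2 := by
    rcases lt_or_eq_of_le (by linarith [htmem.1] : (2:ℝ) ≤ 3 * t) with h | h
    · linarith
    · exfalso
      exact hirrt ⟨2/3, by push_cast; linarith⟩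
  have he0small : 3 * t - 2 < 1 / 3 ^ k := by
    have hpow : (3:ℝ)^k = 3^(k-1) * 3 := by
      rw [← pow_succ]; congr 1; omega
    have h1 : 3^(k-1) * (3 * t - 2) < 1/3 := by rw [← hendval]; exact hend.2
    have h2 : (0:ℝ) < 3^(k-1) := by positivity
    rw [hpow, lt_div_iff₀ (by positivity)]
    nlinarith
  -- rational approximation data
  set m : ℤ := ⌊(3:ℝ)^N₀ * α⌋ with hm
  set p : ℤ := 3 * m + 2 with hp
  set Q : ℤ := 3 ^ (N₀ + 1) with hQ
  have hQR : ((Q:ℝ)) = 3 ^ (N₀+1) := by rw [hQ]; push_cast; ring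
  have hQpos : (0:ℝ) < Q := by rw [hQR]; positivity
  have hQ3 : (3:ℝ) ≤ Q := by
    rw [hQR]
    calc (3:ℝ) = 3^1 := by norm_num
      _ ≤ 3^(N₀+1) := by apply pow_le_pow_right₀ <;> norm_num
  -- e = Qα - p equals 3t - 2
  have hte : 3 * t - 2 = (Q:ℝ) * α - p := by
    rw [ht]; unfold theta
    rw [← Int.self_sub_floor, ← hm, hQR, hp]
    push_cast; ring
  clear_value m p Q
  set e : ℝ := 3 * t - 2 with hedef
  clear_value e
  -- the integer n
  set n : ℤ := a * p^2 + b * p * Q + c * Q^2 with hn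
  clear_value n
  have hiden : (n:ℝ) = -e * (2*a*p + b*Q + a*e) := by
    rw [hn, hte]
    push_cast
    linear_combination ((Q:ℝ))^2 * hroot
  have hn0 : n ≠ 0 := by
    intro h0
    have h0R : (n:ℝ) = 0 := by rw [h0]; push_cast; ring
    rw [hiden] at h0R
    have hene : e ≠ 0 := ne_of_gt he0pos
    have hlin : (2*(a:ℝ)*p + b*Q + a*e) = 0 := by
      rcases mul_eq_zero.1 h0R with h | h
      · exact absurd (by linarith [neg_eq_zero.1 h] : e = 0) hene
      · exact h
    -- then α is rational, contradiction
    rw [hte] at hlin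
    have haQ : ((a:ℝ)) * ((Q:ℝ)) ≠ 0 := by
      apply mul_ne_zero
      · exact_mod_cast ha
      · exact ne_of_gt hQpos
    have heq : (((-((a*p+b*Q : ℤ):ℚ) / ((a*Q : ℤ):ℚ)) : ℚ) : ℝ) = α := by
      push_cast
      rw [div_eq_iff haQ]
      linear_combination -hlin
    exact hirr ⟨_, heq⟩
  -- size bounds
  have hn1 : (1:ℝ) ≤ |(n:ℝ)| := by
    rw [← Int.cast_abs]
    exact_mod_cast Int.one_le_abs hn0
  have he1 : e < 1 := by
    have h1 : (1:ℝ) ≤ 3^k := one_le_pow₀ (by norm_num)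
    calc e < 1/3^k := he0small
      _ ≤ 1 := by rw [div_le_one (by positivity)]; exact h1
  have hppos : |(p:ℝ)| ≤ (Q:ℝ) * (2*H) + 1 := by
    have : (p:ℝ) = (Q:ℝ) * α - e := by rw [hte]; ring
    rw [this]
    have h1 : |(Q:ℝ) * α - e| ≤ |(Q:ℝ) * α| + |e| := abs_sub _ _
    have h2 : |(Q:ℝ) * α| ≤ (Q:ℝ) * (2*H) := by
      rw [abs_mul, abs_of_pos hQpos]; gcongr
    have h3 : |e| ≤ 1 := by rw [abs_of_pos he0pos]; linarith
    linarith
  have hlinbound : |2*(a:ℝ)*p + b*Q + a*e| ≤ 8 * H^2 * Q := by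
    have h1 : |2*(a:ℝ)*p| ≤ 2*H*((Q:ℝ)*(2*H)+1) := by
      rw [abs_mul, abs_mul, abs_two]
      have hx : 2 * |(a:ℝ)| * |(p:ℝ)| ≤ 2 * (H:ℝ) * ((Q:ℝ)*(2*H)+1) := by
        have h0 : (0:ℝ) ≤ |(p:ℝ)| := abs_nonneg _
        have := mul_le_mul haH hppos h0 (by positivity : (0:ℝ) ≤ (H:ℝ))
        nlinarith
      linarith [hx]
    have h2 : |(b:ℝ)*Q| ≤ (H:ℝ) * Q := by
      rw [abs_mul, abs_of_pos hQpos]; gcongr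
    have h3 : |(a:ℝ)*e| ≤ (H:ℝ) := by
      rw [abs_mul, abs_of_pos he0pos]
      have := mul_le_mul haH he1.le he0pos.le (by positivity : (0:ℝ) ≤ (H:ℝ))
      simpa using this
    calc |2*(a:ℝ)*p + b*Q + a*e| ≤ |2*(a:ℝ)*p + b*Q| + |(a:ℝ)*e| := abs_add_le _ _
      _ ≤ |2*(a:ℝ)*p| + |(b:ℝ)*Q| + |(a:ℝ)*e| := by gcongr; exact abs_add_le _ _
      _ ≤ 2*H*((Q:ℝ)*(2*H)+1) + (H:ℝ)*Q + H := by gcongr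
      _ ≤ 8 * H^2 * Q := by
          have hH0 : (0:ℝ) ≤ H := by positivity
          have k1 : (0:ℝ) ≤ ((H:ℝ)*Q)*(H-1) :=
            mul_nonneg (mul_nonneg hH0 hQpos.le) (by linarith)
          have k2 : (0:ℝ) ≤ (H:ℝ)*(Q-3) := mul_nonneg hH0 (by linarith)
          have k4 : (0:ℝ) ≤ (H:ℝ)^2*Q := by positivity
          nlinarith [k1, k2, k4]
  -- combine: 3^k < 8 H² Q
  have hkey : (3:ℝ)^k < 9 * H^2 * 3^(N₀+1) := by
    have h1 : (1:ℝ) ≤ e * (8 * H^2 * Q) := by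
      calc (1:ℝ) ≤ |(n:ℝ)| := hn1
        _ = |(-e)| * |2*(a:ℝ)*p + b*Q + a*e| := by rw [← abs_mul, ← hiden]
        _ = e * |2*(a:ℝ)*p + b*Q + a*e| := by rw [abs_neg, abs_of_pos he0pos]
        _ ≤ e * (8 * H^2 * Q) := by gcongr
    have h2 : (1:ℝ) < (1/3^k) * (8 * H^2 * Q) := by
      have hpos : (0:ℝ) < 8 * H^2 * Q := by positivity
      calc (1:ℝ) ≤ e * (8 * H^2 * Q) := h1
        _ < (1/3^k) * (8 * H^2 * Q) := by gcongr
    rw [hQR] at h2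
    have h3k : (0:ℝ) < 3^k := by positivity
    rw [div_mul_eq_mul_div, one_mul, lt_div_iff₀ h3k, one_mul] at h2
    have hXpos : (0:ℝ) ≤ (H:ℝ)^2 * 3^(N₀+1) := by positivity
    nlinarith
  -- take logarithms
  have hlog : (k:ℝ) < Real.logb 3 (9 * H^2 * 3^(N₀+1)) := by
    have := Real.logb_lt_logb (by norm_num : (1:ℝ) < 3) (by positivity : (0:ℝ) < 3^k) hkey
    rwa [Real.logb_pow, Real.logb_self_eq_one (by norm_num), mul_one] at this
  have hlogval : Real.logb 3 (9 * (H:ℝ)^2 * 3^(N₀+1)) = 2 + 2 * Real.logb 3 H + (N₀+1) := by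
    have hHne : ((H:ℝ))^2 ≠ 0 := by positivity
    rw [Real.logb_mul (by positivity) (by positivity), Real.logb_mul (by norm_num) hHne,
      Real.logb_pow, Real.logb_pow, Real.logb_self_eq_one (by norm_num)]
    have h9 : Real.logb 3 9 = 2 := by
      rw [show (9:ℝ) = 3^(2:ℕ) by norm_num, Real.logb_pow,
        Real.logb_self_eq_one (by norm_num)]
      norm_num
    rw [h9]; push_cast; ring
  rw [hlogval] at hlog
  linarith
end

section
/- There exists an absolute constant C⋆ > 0 with the following property. Let α be a quadratic irrational with primitive integer minimal polynomial f(x) = ax² + bx + c and height H = max(|a|,|b|,|c|). For every N ≥ 0, with p_N = 3⌊3^N α⌋ + 2 and q_N = 3^{N+1}, the integer A_N := a p_N² + b p_N q_N + c q_N² is nonzero and satisfies |A_N| ≤ C⋆ · H² · q_N · |θ_N − 2/3|, where θ_N = {3^N α}. Moreover, if θ_N ∈ R = [2/3, 1) and θ_{N+1}, …, θ_{N+k} ∈ L = [0, 1/3) for some k ≥ 1, then |θ_N − 2/3| < 3^{−(k+1)} and hence |A_N| ≤ C⋆ · H² · 3^{N−k}. -/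
/-- The numerator p_N = 3⌊3^N α⌋ + 2 of the digit-forced triadic rational. -/
noncomputable def pN (α : ℝ) (N : ℕ) : ℤ := 3 * ⌊(3 : ℝ) ^ N * α⌋ + 2

/-- A_N = a p_N² + b p_N q_N + c q_N² with q_N = 3^{N+1}. -/
noncomputable def AN (α : ℝ) (a b c : ℤ) (N : ℕ) : ℤ :=
  a * (pN α N) ^ 2 + b * (pN α N) * 3 ^ (N + 1) + c * (3 ^ (N + 1)) ^ 2

lemma pN_sub (α : ℝ) (N : ℕ) :
    ((pN α N : ℝ)) - (3:ℝ)^(N+1) * α = -3 * (theta α N - 2/3) := by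
  unfold pN theta
  rw [Int.fract]
  push_cast
  rw [pow_succ]
  ring

lemma an_eq (α : ℝ) (a b c : ℤ) (N : ℕ)
    (hroot : (a : ℝ) * α ^ 2 + (b : ℝ) * α + (c : ℝ) = 0) :
    ((AN α a b c N : ℤ) : ℝ) =
      ((pN α N : ℝ) - (3:ℝ)^(N+1) * α) *
        ((a:ℝ) * (pN α N) + (a:ℝ) * (3:ℝ)^(N+1) * α + (b:ℝ) * (3:ℝ)^(N+1)) := by
  have hc : (c:ℝ) = -((a:ℝ)*α^2) - (b:ℝ)*α := by linarith
  unfold AN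
  push_cast
  rw [hc]
  ring

set_option maxHeartbeats 1000000 in
/-- Small value of the quadratic form: there is an absolute constant C⋆ > 0
such that for every quadratic irrational α with primitive minimal polynomial
ax²+bx+c and height H, and every N ≥ 0, the integer A_N is nonzero and
|A_N| ≤ C⋆ H² q_N |θ_N - 2/3|; moreover if θ_N ∈ R and θ_{N+1},…,θ_{N+k} ∈ L
(k ≥ 1), then |θ_N - 2/3| < 3^{-(k+1)} and |A_N| ≤ C⋆ H² 3^{N-k}. -/
theorem stmt9 :
    ∃ Cs : ℝ, 0 < Cs ∧
      ∀ (α : ℝ) (a b c : ℤ) (H : ℕ),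
        Irrational α → a ≠ 0 →
        (a : ℝ) * α ^ 2 + (b : ℝ) * α + (c : ℝ) = 0 →
        Int.gcd a (Int.gcd b c) = 1 →
        H = max a.natAbs (max b.natAbs c.natAbs) →
        ∀ N : ℕ,
          AN α a b c N ≠ 0 ∧
          (|AN α a b c N| : ℝ) ≤ Cs * (H : ℝ) ^ 2 * 3 ^ (N + 1) * |theta α N - 2/3| ∧
          ∀ k : ℕ, 1 ≤ k →
            theta α N ∈ Set.Ico (2/3 : ℝ) 1 →
            (∀ j, 1 ≤ j → j ≤ k → theta α (N + j) ∈ Set.Ico (0 : ℝ) (1/3)) →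
            |theta α N - 2/3| < ((3 : ℝ) ^ (k + 1))⁻¹ ∧
            (|AN α a b c N| : ℝ) ≤ Cs * (H : ℝ) ^ 2 * (3 : ℝ) ^ ((N : ℤ) - (k : ℤ)) := by
  refine ⟨24, by norm_num, ?_⟩
  intro α a b c H hirr ha0 hroot _hgcd hH N
  set q : ℝ := (3:ℝ)^(N+1) with hqdef
  have hq0 : (0:ℝ) < q := by positivity
  have hq1 : (1:ℝ) ≤ q := one_le_pow₀ (by norm_num)
  -- basic bounds
  have haH : |(a:ℝ)| ≤ (H:ℝ) := by
    rw [← Int.cast_abs, Int.abs_eq_natAbs]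
    exact_mod_cast hH ▸ le_max_left _ _
  have hbH : |(b:ℝ)| ≤ (H:ℝ) := by
    rw [← Int.cast_abs, Int.abs_eq_natAbs]
    exact_mod_cast hH ▸ le_trans (le_max_left _ _) (le_max_right _ _)
  have hcH : |(c:ℝ)| ≤ (H:ℝ) := by
    rw [← Int.cast_abs, Int.abs_eq_natAbs]
    exact_mod_cast hH ▸ le_trans (le_max_right _ _) (le_max_right _ _)
  have ha1 : (1:ℝ) ≤ |(a:ℝ)| := by
    rw [← Int.cast_abs]
    exact_mod_cast Int.one_le_abs ha0
  have hH1 : (1:ℝ) ≤ (H:ℝ) := le_trans ha1 haH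
  have halpha : |α| ≤ 2 * (H:ℝ) := by
    rcases le_or_gt |α| 1 with h | h
    · linarith
    · have h1 : |(a:ℝ)| * |α|^2 = |(b:ℝ)*α + (c:ℝ)| := by
        rw [← abs_pow, ← abs_mul]
        have : (a:ℝ) * α^2 = -((b:ℝ)*α + (c:ℝ)) := by linarith
        rw [this, abs_neg]
      have h2 : |(b:ℝ)*α + (c:ℝ)| ≤ |(b:ℝ)| * |α| + |(c:ℝ)| :=
        le_trans (abs_add_le _ _) (by rw [abs_mul])
      have h3 : |α|^2 ≤ |(a:ℝ)| * |α|^2 := by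
        nlinarith [abs_nonneg α]
      nlinarith [abs_nonneg α, abs_nonneg (b:ℝ), abs_nonneg (c:ℝ)]
  have hθ := Int.fract_nonneg ((3:ℝ)^N * α)
  have hθ1 := Int.fract_lt_one ((3:ℝ)^N * α)
  have htheta0 : (0:ℝ) ≤ theta α N := hθ
  have htheta1 : theta α N < 1 := hθ1
  have ht_abs : |theta α N - 2/3| ≤ 1 := by
    rw [abs_le]; constructor <;> [linarith; linarith]
  set t : ℝ := |theta α N - 2/3| with htdef
  have ht0 : 0 ≤ t := abs_nonneg _
  have hd : ((pN α N : ℝ)) - q * α = -3 * (theta α N - 2/3) := pN_sub α N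
  have hdabs : |((pN α N : ℝ)) - q * α| = 3 * t := by
    rw [hd, htdef, abs_mul]
    norm_num
  have hAeq := an_eq α a b c N hroot
  -- factor 2 bound
  have hf2 : |(a:ℝ) * (pN α N) + (a:ℝ) * q * α + (b:ℝ) * q| ≤ 8 * (H:ℝ)^2 * q := by
    have hrw : (a:ℝ) * (pN α N) + (a:ℝ) * q * α + (b:ℝ) * q
        = (a:ℝ) * (((pN α N : ℝ)) - q * α) + (2 * (a:ℝ) * q * α + (b:ℝ) * q) := by ring
    rw [hrw]
    have h1 : |(a:ℝ) * (((pN α N : ℝ)) - q * α)| ≤ 3 * (H:ℝ) := by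
      rw [abs_mul, hdabs]
      nlinarith
    have h2 : |2 * (a:ℝ) * q * α| ≤ 4 * (H:ℝ)^2 * q := by
      calc |2 * (a:ℝ) * q * α| = 2 * |(a:ℝ)| * q * |α| := by
            rw [abs_mul, abs_mul, abs_mul, abs_of_pos hq0]; norm_num
        _ ≤ 2 * (H:ℝ) * q * (2 * (H:ℝ)) := by gcongr <;> linarith
        _ = 4 * (H:ℝ)^2 * q := by ring
    have h3 : |(b:ℝ) * q| ≤ (H:ℝ) * q := by
      rw [abs_mul, abs_of_pos hq0]
      nlinarith
    calc |(a:ℝ) * (((pN α N : ℝ)) - q * α) + (2 * (a:ℝ) * q * α + (b:ℝ) * q)|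
        ≤ |(a:ℝ) * (((pN α N : ℝ)) - q * α)| + |2 * (a:ℝ) * q * α + (b:ℝ) * q| := abs_add_le _ _
      _ ≤ |(a:ℝ) * (((pN α N : ℝ)) - q * α)| + (|2 * (a:ℝ) * q * α| + |(b:ℝ) * q|) := by
          gcongr; exact abs_add_le _ _
      _ ≤ 3 * (H:ℝ) + (4 * (H:ℝ)^2 * q + (H:ℝ) * q) := by gcongr
      _ ≤ 8 * (H:ℝ)^2 * q := by
          have e1 : (H:ℝ) ≤ (H:ℝ)^2*q := by nlinarith
          have e2 : (H:ℝ)*q ≤ (H:ℝ)^2*q := by nlinarith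
          linarith
  -- main bound
  have hmain : (|AN α a b c N| : ℝ) ≤ 24 * (H:ℝ)^2 * q * t := by
    have : (|AN α a b c N| : ℝ) = |((AN α a b c N : ℤ) : ℝ)| := by push_cast; ring
    rw [this, hAeq, abs_mul, hdabs]
    calc 3 * t * |(a:ℝ) * (pN α N) + (a:ℝ) * q * α + (b:ℝ) * q|
        ≤ 3 * t * (8 * (H:ℝ)^2 * q) := by
          apply mul_le_mul_of_nonneg_left hf2 (by linarith)
      _ = 24 * (H:ℝ)^2 * q * t := by ring
  -- nonvanishing
  have hne : AN α a b c N ≠ 0 := by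
    intro h0
    have h0' : ((AN α a b c N : ℤ) : ℝ) = 0 := by rw [h0]; norm_num
    rw [hAeq] at h0'
    rcases mul_eq_zero.1 h0' with h | h
    · -- α = p/q rational
      apply (irrational_iff_ne_rational α).1 hirr (pN α N) (3^(N+1)) (by positivity)
      have hq0' : (((3:ℤ)^(N+1) : ℤ) : ℝ) ≠ 0 := by positivity
      rw [eq_div_iff hq0']
      push_cast at h ⊢
      linarith
    · -- α rational from linear equation
      have hden : (a:ℝ) * q ≠ 0 := by
        apply mul_ne_zero
        · exact_mod_cast ha0
        · exact ne_of_gt hq0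
      have hdenz : (a * 3^(N+1) : ℤ) ≠ 0 := mul_ne_zero ha0 (by positivity)
      have hden' : (a:ℝ) * (3:ℝ)^(N+1) ≠ 0 := by exact_mod_cast hdenz
      have hval : α = ((((-(a * (pN α N)) - b * 3^(N+1) : ℤ) : ℚ) / ((a * 3^(N+1) : ℤ) : ℚ) : ℚ) : ℝ) := by
        push_cast
        rw [eq_div_iff hden']
        nlinarith [h]
      exact hirr ⟨_, hval.symm⟩
  refine ⟨hne, by simpa using hmain, ?_⟩
  -- the k part
  intro k hk hR hL
  have hRl : 2/3 ≤ theta α N := hR.1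
  have key : ∀ j, 1 ≤ j → j ≤ k → theta α (N + j) = 3^j * (theta α N - 2/3) := by
    intro j
    induction j with
    | zero => omega
    | succ j ih =>
      intro _ hjk
      rcases Nat.eq_zero_or_pos j with hj0 | hj1
      · subst hj0
        rw [theta_succ α N]
        have h23 : (0:ℝ) ≤ 3 * theta α N - 2 := by linarith
        have h23' : 3 * theta α N - 2 < 1 := by linarith
        have : Int.fract (3 * theta α N) = Int.fract (3 * theta α N - ((2:ℤ):ℝ)) := by
          rw [Int.fract_sub_intCast]
        rw [this]
        rw [Int.fract_eq_self.2 ⟨by push_cast; linarith, by push_cast; linarith⟩]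
        push_cast
        ring
      · have hjk' : j ≤ k := by omega
        have hval := ih hj1 hjk'
        have hmem := hL j hj1 hjk'
        rw [hval] at hmem
        have h0 : (0:ℝ) ≤ 3 * (3^j * (theta α N - 2/3)) := by
          have := hmem.1; linarith
        have h1 : 3 * (3^j * (theta α N - 2/3)) < 1 := by
          have := hmem.2; linarith
        rw [show N + (j+1) = (N + j) + 1 from rfl, theta_succ, hval,
          Int.fract_eq_self.2 ⟨h0, h1⟩]
        ring
  have hkk := key k hk le_rfl
  have hLk := (hL k hk le_rfl)
  rw [hkk] at hLk
  have hpk : (0:ℝ) < (3:ℝ)^k := by positivity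
  have hsmall : theta α N - 2/3 < ((3:ℝ)^(k+1))⁻¹ := by
    have h2 : (3:ℝ)^k * (theta α N - 2/3) < 1/3 := hLk.2
    rw [show ((3:ℝ)^(k+1))⁻¹ = (1/3) / (3:ℝ)^k by rw [pow_succ]; field_simp]
    rw [lt_div_iff₀ hpk]
    linarith [h2]
  have habs : |theta α N - 2/3| < ((3:ℝ)^(k+1))⁻¹ := by
    rw [abs_of_nonneg (by linarith : (0:ℝ) ≤ theta α N - 2/3)]
    exact hsmall
  refine ⟨habs, ?_⟩
  have hz : (3:ℝ) ^ ((N:ℤ) - (k:ℤ)) = q * ((3:ℝ)^(k+1))⁻¹ := by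
    have : ((N:ℤ) - (k:ℤ)) = ((N+1:ℕ):ℤ) - ((k+1:ℕ):ℤ) := by push_cast; ring
    rw [this, zpow_sub₀ (by norm_num : (3:ℝ) ≠ 0), zpow_natCast, zpow_natCast]
    rfl
  calc (|AN α a b c N| : ℝ) ≤ 24 * (H:ℝ)^2 * q * t := hmain
    _ ≤ 24 * (H:ℝ)^2 * q * ((3:ℝ)^(k+1))⁻¹ := by
        apply mul_le_mul_of_nonneg_left (le_of_lt habs)
        positivity
    _ = 24 * (H:ℝ)^2 * (3:ℝ)^((N:ℤ) - (k:ℤ)) := by rw [hz]; ring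
end

section
/- Let C⋆ > 0 be a constant such that for all N the integer A_N = a p_N² + b p_N q_N + c q_N² satisfies |A_N| ≤ C⋆ H² 3^{N−k} whenever θ_N ∈ R is followed by an L-run of length k. Fix T > 0 and set U_T := ⌈C⋆ · 3^{−T}⌉. Let α be a quadratic irrational with minimal polynomial f(x) = ax² + bx + c of height H. If N is a transition time with θ_N ∈ R whose subsequent L-run has length k ≥ N + 2 log₃ H + T, then |A_N| ≤ U_T; equivalently, (p, n) = (p_N, N+1) solves a p² + b p 3^n + c 3^{2n} = u for some integer u with 0 < |u| ≤ U_T. Moreover, for each such u one has the identity (2ap + b·3^n)² − Δ_f · 3^{2n} = 4au, where Δ_f = b² − 4ac. -/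
/-- Deep blocks reduce to bounded-norm 3-power equations: if
|A_N| ≤ C⋆ H² 3^{N-k} holds whenever θ_N ∈ R is followed by an L-run of
length k, T > 0, U_T = ⌈C⋆ 3^{-T}⌉, and N is a transition time whose L-run
has length k ≥ N + 2log₃H + T, then |A_N| ≤ U_T; equivalently
(p,n) = (p_N, N+1) solves a p² + b p 3ⁿ + c 3²ⁿ = u for some 0 < |u| ≤ U_T,
and (2ap + b 3ⁿ)² - Δ_f 3²ⁿ = 4au with Δ_f = b² - 4ac. -/
theorem stmt10 (α : ℝ) (a b c : ℤ) (H : ℕ)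
    (hirr : Irrational α) (ha : a ≠ 0)
    (hroot : (a : ℝ) * α ^ 2 + (b : ℝ) * α + (c : ℝ) = 0)
    (hprim : Int.gcd a (Int.gcd b c) = 1)
    (hH : H = max a.natAbs (max b.natAbs c.natAbs))
    (Cs : ℝ) (hCs : 0 < Cs)
    (hCprop : ∀ (N k : ℕ),
      theta α N ∈ Set.Ico (2/3 : ℝ) 1 →
      (∀ j, 1 ≤ j → j ≤ k → theta α (N + j) ∈ Set.Ico (0 : ℝ) (1/3)) →
      (|AN α a b c N| : ℝ) ≤ Cs * (H : ℝ) ^ 2 * (3 : ℝ) ^ ((N : ℤ) - (k : ℤ)))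
    (T : ℝ) (hT : 0 < T)
    (N k : ℕ)
    (hR : theta α N ∈ Set.Ico (2/3 : ℝ) 1)
    (hL1 : theta α (N + 1) ∈ Set.Ico (0 : ℝ) (1/3))
    (hrun : ∀ j, 1 ≤ j → j ≤ k → theta α (N + j) ∈ Set.Ico (0 : ℝ) (1/3))
    (hmax : theta α (N + k + 1) ∉ Set.Ico (0 : ℝ) (1/3))
    (hdeep : (k : ℝ) ≥ (N : ℝ) + 2 * Real.logb 3 (H : ℝ) + T) :
    |AN α a b c N| ≤ ⌈Cs * (3 : ℝ) ^ (-T)⌉ ∧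
    (∃ u : ℤ, 0 < |u| ∧ |u| ≤ ⌈Cs * (3 : ℝ) ^ (-T)⌉ ∧
      a * (pN α N) ^ 2 + b * (pN α N) * 3 ^ (N + 1) + c * 3 ^ (2 * (N + 1)) = u ∧
      (2 * a * (pN α N) + b * 3 ^ (N + 1)) ^ 2
          - (b ^ 2 - 4 * a * c) * 3 ^ (2 * (N + 1)) = 4 * a * u) := by
  classical
  set p : ℤ := pN α N with hp
  set q : ℤ := 3 ^ (N + 1) with hq
  have hHpos : 0 < H := by
    have h1 : 1 ≤ a.natAbs := Nat.one_le_iff_ne_zero.mpr (Int.natAbs_ne_zero.mpr ha)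
    rw [hH]; omega
  have hH1 : (1:ℝ) ≤ (H:ℝ) := by exact_mod_cast hHpos
  have h3pos : (0:ℝ) < 3 := by norm_num
  -- Step 1: A_N ≠ 0
  have hqR : ((q:ℝ)) ≠ 0 := by
    rw [hq]; push_cast; positivity
  have haR : ((a:ℝ)) ≠ 0 := Int.cast_ne_zero.mpr ha
  have hAne : AN α a b c N ≠ 0 := by
    intro h0
    have h0R : (a:ℝ) * (p:ℝ)^2 + (b:ℝ) * (p:ℝ) * (q:ℝ) + (c:ℝ) * (q:ℝ)^2 = 0 := by
      have : ((AN α a b c N : ℤ) : ℝ) = 0 := by rw [h0]; norm_num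
      unfold AN at this; push_cast at this ⊢
      convert this using 2 <;> push_cast [hp, hq, pN] <;> ring
    set r : ℝ := (p:ℝ) / (q:ℝ) with hr
    have hrroot : (a:ℝ) * r^2 + (b:ℝ) * r + (c:ℝ) = 0 := by
      rw [hr]
      field_simp
      linear_combination h0R
    have hfac : (α - r) * ((a:ℝ) * (α + r) + (b:ℝ)) = 0 := by
      linear_combination hroot - hrroot
    rcases mul_eq_zero.mp hfac with h | h
    · -- α = r, rational
      have hαr : α = r := by linarith [sub_eq_zero.mp h]
      exact hirr ⟨(p:ℚ)/(q:ℚ), by push_cast [hαr, hr]; ring⟩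
    · -- α = -b/a - r, rational
      have hαval : α = ((-(b:ℝ)) * (q:ℝ) - (a:ℝ) * (p:ℝ)) / ((a:ℝ) * (q:ℝ)) := by
        have hr' : (a:ℝ) * α + (a:ℝ) * r + (b:ℝ) = 0 := by ring_nf; ring_nf at h; linarith
        field_simp [hr] at hr' ⊢
        have hrq : r * (q:ℝ) = (p:ℝ) := by rw [hr]; exact div_mul_cancel₀ _ hqR
        linear_combination (q:ℝ) * hr' - (a:ℝ) * hrq
      exact hirr ⟨((-(b:ℚ)) * (q:ℚ) - (a:ℚ) * (p:ℚ)) / ((a:ℚ) * (q:ℚ)), by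
        push_cast [hαval]; ring_nf⟩
  -- Step 2: the bound
  have hbound := hCprop N k hR hrun
  have hzpow : ((3:ℝ) ^ ((N:ℤ) - (k:ℤ))) = (3:ℝ) ^ (((N:ℝ) - (k:ℝ))) := by
    rw [← Real.rpow_intCast]; push_cast; ring_nf
  have hHrw : (H:ℝ)^2 = (3:ℝ) ^ (2 * Real.logb 3 (H:ℝ)) := by
    have h1 : (3:ℝ) ^ (Real.logb 3 (H:ℝ)) = (H:ℝ) :=
      Real.rpow_logb h3pos (by norm_num) (by positivity)
    rw [two_mul, Real.rpow_add h3pos, h1]; ring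
  have hkey : Cs * (H:ℝ)^2 * (3:ℝ) ^ ((N:ℤ) - (k:ℤ)) ≤ Cs * (3:ℝ) ^ (-T) := by
    rw [hzpow, hHrw, mul_assoc, ← Real.rpow_add h3pos]
    have hexp : 2 * Real.logb 3 (H:ℝ) + ((N:ℝ) - (k:ℝ)) ≤ -T := by linarith
    have hle : (3:ℝ) ^ (2 * Real.logb 3 (H:ℝ) + ((N:ℝ) - (k:ℝ))) ≤ (3:ℝ) ^ (-T) :=
      (Real.rpow_le_rpow_left_iff (by norm_num : (1:ℝ) < 3)).mpr hexp
    exact mul_le_mul_of_nonneg_left hle hCs.le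
  have hfin : (|AN α a b c N| : ℝ) ≤ Cs * (3:ℝ) ^ (-T) := le_trans hbound hkey
  have hceil : (|AN α a b c N| : ℝ) ≤ ((⌈Cs * (3:ℝ) ^ (-T)⌉ : ℤ) : ℝ) :=
    le_trans hfin (Int.le_ceil _)
  have hmain : |AN α a b c N| ≤ ⌈Cs * (3:ℝ) ^ (-T)⌉ := by exact_mod_cast hceil
  refine ⟨hmain, AN α a b c N, ?_, hmain, ?_, ?_⟩
  · exact abs_pos.mpr hAne
  · unfold AN pN; rw [hp, pN]; ring
  · unfold AN pN; rw [hp, pN]; ring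
end
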